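/- Let G be a graph, τ a threshold function, X ⊆ V(G), and suppose N_G[U] ⊆ X for a set U ⊆ V(G) such that every u ∈ U satisfies τ(u) = deg_G(u) and N_G(u) ⊆ N_G[U], and every w ∈ N_G(U) satisfies τ(w) ≤ |N_G(w) ∩ N_G[U]| whenever N_G[U] is active. If (X'_t) is the activation process on (G', τ') starting with X \ N_G[U], where G' = G − N_G[U] and τ'(u) = max{0, τ(u) − |N_G(u) ∩ N_G[U]|}, and (X_t) is the process on (G,τ) starting with X, and N_G[U] ⊆ X_t for all t, then X_t = X'_t ∪ N_G[U] for all t ≥ 0. -/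

import Mathlib

open Finset

/-- The non-monotone activation process on `(G, τ)` starting with `X`:
`X_t = {u : |N_G(u) ∩ X_{t-1}| ≥ τ(u)}` for `t ≥ 1`. -/
def activation {V : Type*} (G : SimpleGraph V) [Fintype V] [DecidableEq V]
    [DecidableRel G.Adj] (τ : V → ℤ) (X : Finset V) : ℕ → Finset V
  | 0 => X
  | t + 1 => Finset.univ.filter
      (fun u => τ u ≤ ((G.neighborFinset u ∩ activation G τ X t).card : ℤ))

/-- `X` is a non-monotone target set for `(G, τ)`. -/
def IsTargetSet {V : Type*} (G : SimpleGraph V) [Fintype V] [DecidableEq V]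
    [DecidableRel G.Adj] (τ : V → ℤ) (X : Finset V) : Prop :=
  ∃ t₀ : ℕ, ∀ t ≥ t₀, activation G τ X t = Finset.univ

/-- Open neighbourhood of a set of vertices: `N_G(S)`. -/
def openNbhd {V : Type*} (G : SimpleGraph V) (S : Set V) : Set V :=
  {v | v ∉ S ∧ ∃ u ∈ S, G.Adj u v}

/-- Closed neighbourhood of a set of vertices: `N_G[S]`. -/
def closedNbhd {V : Type*} (G : SimpleGraph V) (S : Set V) : Set V :=
  S ∪ openNbhd G S

/-- Closed neighbourhood, as a finset. -/
def closedNbhdFinset {V : Type*} (G : SimpleGraph V) [Fintype V] [DecidableEq V]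
    [DecidableRel G.Adj] (U : Finset V) : Finset V :=
  U ∪ Finset.univ.filter (fun v => ∃ u ∈ U, G.Adj u v)

/-- `U` is the vertex set of a connected component of the subgraph of `G` induced by `S`. -/
def IsComponentOf {V : Type*} (G : SimpleGraph V) (S U : Set V) : Prop :=
  U ⊆ S ∧ U.Nonempty ∧ (G.induce U).Connected ∧
    ∀ u ∈ U, ∀ v ∈ S, G.Adj u v → v ∈ U

/-- The subgraph of `G` induced by `S`, as a graph on the subtype `S`. -/
def restrict {V : Type*} (G : SimpleGraph V) (S : Set V) : SimpleGraph S where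
  Adj a b := G.Adj a b
  symm := ⟨fun _ _ h => G.adj_symm h⟩
  loopless := ⟨fun _ h => G.ne_of_adj h rfl⟩

instance {V : Type*} (G : SimpleGraph V) (S : Set V) [h : DecidableRel G.Adj] :
    DecidableRel (restrict G S).Adj := fun a b => h a b

theorem stmt_18 {V : Type*} [Fintype V] [DecidableEq V] (G : SimpleGraph V)
    [DecidableRel G.Adj] (τ : V → ℤ) (X : Finset V) (U : Finset V)
    (hU : ∀ u ∈ U, τ u = (G.degree u : ℤ) ∧ ∀ w, G.Adj u w → w ∈ closedNbhdFinset G U)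
    (hw : ∀ w ∈ openNbhd G (↑U : Set V),
      τ w ≤ ((G.neighborFinset w ∩ closedNbhdFinset G U).card : ℤ))
    (hXN : closedNbhdFinset G U ⊆ X)
    (hact : ∀ t : ℕ, closedNbhdFinset G U ⊆ activation G τ X t) :
    ∀ t : ℕ, activation G τ X t =
      (activation (restrict G {v | v ∉ closedNbhdFinset G U})
        (fun u => max 0 (τ ↑u - ((G.neighborFinset ↑u ∩ closedNbhdFinset G U).card : ℤ)))
        (Finset.univ.filter (fun u => ↑u ∈ X)) t).image Subtype.val ∪
        closedNbhdFinset G U := by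
  classical
  intro t
  induction t with
  | zero =>
    simp only [activation]
    ext v
    simp only [Finset.mem_union, Finset.mem_image, Finset.mem_filter, Finset.mem_univ, true_and]
    constructor
    · intro hv
      by_cases h : v ∈ closedNbhdFinset G U
      · exact Or.inr h
      · exact Or.inl ⟨⟨v, h⟩, hv, rfl⟩
    · rintro (⟨x, hx, rfl⟩ | h)
      · exact hx
      · exact hXN h
  | succ t ih =>
    set N := closedNbhdFinset G U with hN
    set S : Set V := {v | v ∉ N} with hS
    set X' := activation (restrict G S)
        (fun u => max 0 (τ ↑u - ((G.neighborFinset ↑u ∩ N).card : ℤ)))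
        (Finset.univ.filter (fun u : S => ↑u ∈ X)) with hX'
    ext v
    by_cases hvN : v ∈ N
    · simp only [Finset.mem_union]
      exact ⟨fun _ => Or.inr hvN, fun _ => hact (t+1) hvN⟩
    · set A := (X' t).image Subtype.val with hA
      have hAN : ∀ w ∈ A, w ∉ N := by
        rintro w hw
        simp only [hA, Finset.mem_image] at hw
        obtain ⟨x, _, rfl⟩ := hw
        exact x.2
      have hdisj : Disjoint (G.neighborFinset v ∩ A) (G.neighborFinset v ∩ N) := by
        rw [Finset.disjoint_left]
        intro w hw1 hw2
        exact hAN w (Finset.mem_inter.mp hw1).2 (Finset.mem_inter.mp hw2).2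
      have hcard2 : (G.neighborFinset v ∩ A).card
          = ((restrict G S).neighborFinset ⟨v, hvN⟩ ∩ X' t).card := by
        have himg : ((restrict G S).neighborFinset ⟨v, hvN⟩ ∩ X' t).image Subtype.val
            = G.neighborFinset v ∩ A := by
          ext w
          simp only [Finset.mem_image, Finset.mem_inter, SimpleGraph.mem_neighborFinset, hA]
          constructor
          · rintro ⟨x, ⟨hadj, hx⟩, rfl⟩
            exact ⟨hadj, x, hx, rfl⟩
          · rintro ⟨hadj, x, hx, rfl⟩
            exact ⟨x, ⟨hadj, hx⟩, rfl⟩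
        rw [← himg, Finset.card_image_of_injective _ Subtype.val_injective]
      have hcard : ((G.neighborFinset v ∩ activation G τ X t).card : ℤ)
          = ((restrict G S).neighborFinset ⟨v, hvN⟩ ∩ X' t).card
            + (G.neighborFinset v ∩ N).card := by
        rw [ih]
        rw [Finset.inter_union_distrib_left, Finset.card_union_of_disjoint hdisj]
        push_cast
        rw [hcard2]
      have hrhs : v ∈ (X' (t+1)).image Subtype.val ∪ N ↔ ⟨v, hvN⟩ ∈ X' (t+1) := by
        simp only [Finset.mem_union, Finset.mem_image]
        constructor
        · rintro (⟨x, hx, rfl⟩ | h)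
          · exact hx
          · exact absurd h hvN
        · intro h
          exact Or.inl ⟨⟨v, hvN⟩, h, rfl⟩
      rw [hrhs]
      show v ∈ activation G τ X (t+1) ↔ _
      conv_rhs => rw [hX']
      simp only [activation, Finset.mem_filter, Finset.mem_univ, true_and, ← hX']
      rw [hcard]
      have hnn : (0:ℤ) ≤ (((restrict G S).neighborFinset ⟨v, hvN⟩ ∩ X' t).card : ℤ) :=
        Int.natCast_nonneg _
      constructor
      · intro h
        rw [max_le_iff]
        exact ⟨hnn, by linarith⟩
      · intro h
        rw [max_le_iff] at h
        linarith [h.2]
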